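/- Let R be an integral domain which is a ℚ-algebra, f ∈ R⟦X⟧ and a ∈ R. Then for every n ≥ 1: A_n(rescale a f) = a^{n−1} · rescale a (A_n(f)). Equivalently, at the level of flows, a·Φ_{rescale a f}(X,T) = Φ_f(aX, aT): multiplying the flow of f(aX) by a agrees with the flow of f with both the space variable and the time variable rescaled by a. -/

import Mathlib

open PowerSeries

/-- The autonomous polynomials of a power series: `A_1(f) = f` and
`A_{n+1}(f) = f·δ(A_n(f))`.  Here `autPolyPS f m` is `A_{m+1}(f)`. -/
noncomputable def autPolyPS {R : Type*} [CommRing R] (f : PowerSeries R) :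
    ℕ → PowerSeries R
  | 0 => f
  | m + 1 => f * derivativeFun (autPolyPS f m)

/-- The flow `Φ_f = X + ∑_{n≥1} A_n(f)·T^n/n!` of `f ∈ R⟦X⟧`, as a power series in the time
variable `T` with coefficients in `R⟦X⟧`. -/
noncomputable def flowPS {R : Type*} [CommRing R] [Algebra ℚ R] (f : PowerSeries R) :
    PowerSeries (PowerSeries R) :=
  PowerSeries.mk fun n => if n = 0 then PowerSeries.X
    else PowerSeries.C (R := R) (algebraMap ℚ R (1 / n.factorial)) * autPolyPS f (n - 1)

lemma derivativeFun_rescale {R : Type*} [CommRing R] (g : PowerSeries R) (a : R) :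
    derivativeFun (rescale a g) = PowerSeries.C (R := R) a * rescale a (derivativeFun g) := by
  ext n
  simp only [show ∀ h : PowerSeries R, derivativeFun h = derivative R h from fun _ => rfl,
    coeff_derivativeFun, coeff_rescale, coeff_C_mul]
  ring

lemma rescale_C' {R : Type*} [CommRing R] (a r : R) :
    rescale a (PowerSeries.C (R := R) r) = PowerSeries.C (R := R) r := by
  ext n
  simp only [coeff_rescale, coeff_C]
  split <;> simp_all

lemma autPolyPS_rescale_aux {R : Type*} [CommRing R] (f : PowerSeries R) (a : R) (m : ℕ) :
    autPolyPS (rescale a f) m = PowerSeries.C (R := R) a ^ m * rescale a (autPolyPS f m) := by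
  induction m with
  | zero => simp [autPolyPS]
  | succ m ih =>
    rw [autPolyPS, autPolyPS, ih]
    have : derivativeFun (PowerSeries.C (R := R) a ^ m * rescale a (autPolyPS f m)) =
        PowerSeries.C (R := R) a ^ m * derivativeFun (rescale a (autPolyPS f m)) := by
      rw [← map_pow, ← smul_eq_C_mul, ← smul_eq_C_mul, derivativeFun_smul]
    rw [this, derivativeFun_rescale, map_mul]
    ring

/-- For an integral domain `R` which is a `ℚ`-algebra, `f ∈ R⟦X⟧` and `a ∈ R`, one has
`A_n(rescale a f) = a^{n-1}·rescale a (A_n(f))` for every `n ≥ 1`; equivalently, at the level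
of flows, `a·Φ_{rescale a f}(X,T) = Φ_f(aX,aT)` (coefficientwise in `T`: multiplying the `n`-th
coefficient of the flow of `f(aX)` by `a` agrees with `a^n` times the `n`-th coefficient of the
flow of `f` rescaled in the space variable by `a`). -/
theorem autPolyPS_rescale {R : Type*} [CommRing R] [IsDomain R] [Algebra ℚ R]
    (f : PowerSeries R) (a : R) :
    (∀ n : ℕ, 1 ≤ n → autPolyPS (rescale a f) (n - 1) =
        PowerSeries.C (R := R) a ^ (n - 1) * rescale a (autPolyPS f (n - 1))) ∧
    (∀ n : ℕ, PowerSeries.C (R := R) a * PowerSeries.coeff (R := PowerSeries R) n (flowPS (rescale a f)) =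
        PowerSeries.C (R := R) a ^ n * rescale a (PowerSeries.coeff (R := PowerSeries R) n (flowPS f))) := by
  constructor
  · intro n _
    exact autPolyPS_rescale_aux f a (n - 1)
  · intro n
    rcases Nat.eq_zero_or_pos n with h | h
    · subst h
      simp [flowPS, rescale_X]
    · have hn : n ≠ 0 := h.ne'
      simp only [flowPS, coeff_mk, if_neg hn, autPolyPS_rescale_aux, map_mul, rescale_C']
      rw [show PowerSeries.C (R := R) a * (PowerSeries.C (R := R) ((algebraMap ℚ R) (1 / n.factorial)) *
          (PowerSeries.C (R := R) a ^ (n - 1) * rescale a (autPolyPS f (n - 1)))) =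
        (PowerSeries.C (R := R) a * PowerSeries.C (R := R) a ^ (n - 1)) *
          (PowerSeries.C (R := R) ((algebraMap ℚ R) (1 / n.factorial)) *
            rescale a (autPolyPS f (n - 1))) by ring,
        ← pow_succ', Nat.sub_add_cancel h]
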